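/- For ordered distinct points d₁ < d₂ < ... < d_N in ℝ and the exponential kernel correlation matrix R with entries R_{ij} = exp(−|d_i − d_j|/γ), γ > 0, the matrix L̃ defined as the lower bidiagonal matrix with diagonal entries L̃_{kk} = 1/√(1−ρ_k²) for k < N, L̃_{NN} = 1, and subdiagonal entries L̃_{k+1,k} = −ρ_k/√(1−ρ_k²) where ρ_k = exp(−(d_{k+1}−d_k)/γ), satisfies L̃ L̃ᵀ = R⁻¹. In particular, R⁻¹ is tridiagonal. -/

import Mathlib

open Matrix

/-- For ordered distinct points and the exponential kernel correlation
matrix R, the lower bidiagonal matrix L̃ (diagonal 1/√(1-ρ_k²), last diagonal entry 1,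
subdiagonal -ρ_k/√(1-ρ_k²)) satisfies L̃ L̃ᵀ = R⁻¹; in particular R⁻¹ is tridiagonal. -/
theorem exp_kernel_inverse_bidiagonal_cholesky
    (N : ℕ) (hN : 1 ≤ N) (γ : ℝ) (hγ : 0 < γ)
    (d : ℕ → ℝ) (hd : StrictMono d)
    (R : Matrix (Fin N) (Fin N) ℝ)
    (hR : ∀ i j : Fin N, R i j = Real.exp (-|d i - d j| / γ))
    (ρ : ℕ → ℝ) (hρ : ∀ k : ℕ, ρ k = Real.exp (-(d (k + 1) - d k) / γ))
    (L : Matrix (Fin N) (Fin N) ℝ)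
    (hL : ∀ i j : Fin N, L i j =
      if i = j then
        (if (i : ℕ) + 1 = N then 1 else 1 / Real.sqrt (1 - ρ i ^ 2))
      else if (i : ℕ) = (j : ℕ) + 1 then -ρ j / Real.sqrt (1 - ρ j ^ 2)
      else 0) :
    L * Lᵀ = R⁻¹ ∧
      ∀ i j : Fin N, ((i : ℕ) + 1 < (j : ℕ) ∨ (j : ℕ) + 1 < (i : ℕ)) → R⁻¹ i j = 0 := by
  have hρpos : ∀ k, 0 < ρ k := fun k => by rw [hρ]; exact Real.exp_pos _
  have hρlt : ∀ k, ρ k < 1 := by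
    intro k
    rw [hρ]
    have hdk := hd (Nat.lt_succ_self k)
    have : -(d (k + 1) - d k) / γ < 0 := div_neg_of_neg_of_pos (by linarith) hγ
    calc Real.exp (-(d (k + 1) - d k) / γ) < Real.exp 0 := Real.exp_lt_exp.mpr this
      _ = 1 := Real.exp_zero
  have hspos : ∀ k, 0 < Real.sqrt (1 - ρ k ^ 2) := fun k =>
    Real.sqrt_pos.mpr (by nlinarith [hρpos k, hρlt k])
  have hs2 : ∀ k, Real.sqrt (1 - ρ k ^ 2) ^ 2 = 1 - ρ k ^ 2 := fun k =>
    Real.sq_sqrt (by nlinarith [hρpos k, hρlt k])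
  have hRle : ∀ i j : Fin N, (i : ℕ) ≤ (j : ℕ) → R i j = Real.exp (-(d j - d i) / γ) := by
    intro i j h
    rw [hR, abs_sub_comm, abs_of_nonneg (sub_nonneg.mpr (hd.monotone h))]
  have hRdiag : ∀ i : Fin N, R i i = 1 := by intro i; rw [hR]; simp
  have hRcomm : ∀ a b : Fin N, R a b = R b a := by
    intro a b; rw [hR, hR, abs_sub_comm]
  -- the key cancellation
  have key : ∀ (i n : Fin N) (h : (i : ℕ) + 1 < N), (i : ℕ) < (n : ℕ) →
      (1 / Real.sqrt (1 - ρ i ^ 2)) * R i n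
        + (-ρ i / Real.sqrt (1 - ρ i ^ 2)) * R (⟨(i : ℕ) + 1, h⟩ : Fin N) n = 0 := by
    intro i n h hin
    have h1 : R i n = Real.exp (-(d n - d i) / γ) := hRle i n hin.le
    have h2 : R ⟨(i : ℕ) + 1, h⟩ n = Real.exp (-(d n - d ((i : ℕ) + 1)) / γ) := hRle _ n hin
    have h3 : R i n = ρ i * R ⟨(i : ℕ) + 1, h⟩ n := by
      rw [h1, h2, hρ, ← Real.exp_add]
      congr 1
      field_simp
      ring
    rw [h3]
    ring
  -- column structure of L
  have hcol : ∀ (jj : Fin N) (g : Fin N → ℝ), (∑ m, L m jj * g m) =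
      (if (jj : ℕ) + 1 = N then 1 else 1 / Real.sqrt (1 - ρ jj ^ 2)) * g jj +
      (if h : (jj : ℕ) + 1 < N then
        (-ρ jj / Real.sqrt (1 - ρ jj ^ 2)) * g ⟨(jj : ℕ) + 1, h⟩ else 0) := by
    intro jj g
    have hsplit : ∀ m : Fin N, L m jj * g m =
        (if m = jj then
          (if (jj : ℕ) + 1 = N then 1 else 1 / Real.sqrt (1 - ρ jj ^ 2)) * g m else 0)
        + (if (m : ℕ) = (jj : ℕ) + 1 then
            (-ρ jj / Real.sqrt (1 - ρ jj ^ 2)) * g m else 0) := by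
      intro m
      rw [hL]
      by_cases h1 : m = jj
      · subst h1
        have h2 : ¬((m : ℕ) = (m : ℕ) + 1) := by omega
        simp [h2]
      · simp only [if_neg h1]
        by_cases h2 : (m : ℕ) = (jj : ℕ) + 1 <;> simp [h2]
    rw [Finset.sum_congr rfl (fun m _ => hsplit m), Finset.sum_add_distrib]
    congr 1
    · rw [Finset.sum_ite_eq' Finset.univ jj]
      simp
    · by_cases h : (jj : ℕ) + 1 < N
      · rw [dif_pos h, Finset.sum_eq_single (⟨(jj : ℕ) + 1, h⟩ : Fin N)]
        · simp
        · intro b _ hb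
          rw [if_neg]
          intro hc
          exact hb (Fin.ext hc)
        · intro hmem
          exact absurd (Finset.mem_univ _) hmem
      · rw [dif_neg h]
        apply Finset.sum_eq_zero
        intro m _
        rw [if_neg]
        intro hc
        exact h (hc ▸ m.isLt)
  -- the entries of Lᵀ * R * L for i ≤ j
  have hentry : ∀ i j : Fin N, (i : ℕ) ≤ (j : ℕ) →
      (Lᵀ * R * L) i j = if i = j then 1 else 0 := by
    intro i j hij
    have e1 : (Lᵀ * R * L) i j = ∑ n, L n j * (∑ m, L m i * R m n) := by
      rw [Matrix.mul_apply]
      simp only [Matrix.mul_apply, Matrix.transpose_apply]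
      exact Finset.sum_congr rfl fun n _ => mul_comm _ _
    rw [e1]
    simp only [hcol]
    rcases eq_or_lt_of_le hij with heq | hlt
    · have hij' : i = j := Fin.ext heq
      subst hij'
      rw [if_pos rfl]
      by_cases hj : (i : ℕ) + 1 = N
      · simp only [dif_neg (show ¬(i : ℕ) + 1 < N by omega), if_pos hj, hRdiag]
        ring
      · have hlt' : (i : ℕ) + 1 < N := lt_of_le_of_lt (le_refl _) (by omega)
        have hr1 : R i ⟨(i : ℕ) + 1, hlt'⟩ = ρ i := by
          rw [hRle i ⟨(i : ℕ) + 1, hlt'⟩ (Nat.le_succ _), hρ]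
        have hr2 : R (⟨(i : ℕ) + 1, hlt'⟩ : Fin N) i = ρ i := by
          rw [hRcomm]; exact hr1
        have hr3 : R (⟨(i : ℕ) + 1, hlt'⟩ : Fin N) ⟨(i : ℕ) + 1, hlt'⟩ = 1 := hRdiag _
        simp only [if_neg hj, dif_pos hlt', hRdiag, hr1, hr2, hr3]
        have hsne : Real.sqrt (1 - ρ i ^ 2) ≠ 0 := (hspos i).ne'
        have hse := hs2 (i : ℕ)
        field_simp
        nlinarith [hse]
    · have hiN : (i : ℕ) + 1 < N := lt_of_le_of_lt (Nat.succ_le_of_lt hlt) j.isLt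
      have hne : i ≠ j := by
        intro hc; rw [hc] at hlt; exact lt_irrefl _ hlt
      rw [if_neg hne]
      simp only [dif_pos hiN, if_neg (show ¬(i : ℕ) + 1 = N by omega)]
      rw [key i j hiN hlt]
      by_cases hjN : (j : ℕ) + 1 < N
      · rw [dif_pos hjN, key i ⟨(j : ℕ) + 1, hjN⟩ hiN (Nat.lt_succ_of_lt hlt)]
        ring
      · rw [dif_neg hjN]
        ring
  have h1 : Lᵀ * R * L = 1 := by
    have hRsym : Rᵀ = R := by
      ext a b; rw [Matrix.transpose_apply, hRcomm]
    have hsym : (Lᵀ * R * L)ᵀ = Lᵀ * R * L := by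
      rw [Matrix.transpose_mul, Matrix.transpose_mul, Matrix.transpose_transpose, hRsym,
        Matrix.mul_assoc]
    ext i j
    rcases le_total (i : ℕ) (j : ℕ) with h | h
    · rw [hentry i j h, Matrix.one_apply]
    · have e2 : (Lᵀ * R * L) i j = (Lᵀ * R * L) j i := by
        conv_lhs => rw [← hsym]
        rfl
      rw [e2, hentry j i h]
      rcases eq_or_ne i j with hc | hc
      · subst hc
        simp [Matrix.one_apply]
      · rw [if_neg (fun hc' : j = i => hc hc'.symm)]
        simp [Matrix.one_apply, hc]
  have hdetL : IsUnit L.det := by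
    have hdet := congrArg Matrix.det h1
    rw [Matrix.det_mul, Matrix.det_mul, Matrix.det_one, Matrix.det_transpose] at hdet
    exact IsUnit.of_mul_eq_one (R.det * L.det) (by rw [← hdet]; ring)
  have hLL : L * L⁻¹ = 1 := Matrix.mul_nonsing_inv L hdetL
  have h2 : L * Lᵀ * R = 1 := by
    calc L * Lᵀ * R = L * Lᵀ * R * (L * L⁻¹) := by rw [hLL, mul_one]
      _ = L * (Lᵀ * R * L) * L⁻¹ := by simp only [Matrix.mul_assoc]
      _ = 1 := by rw [h1, mul_one, hLL]
  have hinv : R⁻¹ = L * Lᵀ := Matrix.inv_eq_left_inv h2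
  refine ⟨hinv.symm, ?_⟩
  intro i j hij
  rw [hinv, Matrix.mul_apply]
  apply Finset.sum_eq_zero
  intro m _
  rw [Matrix.transpose_apply]
  have hz : ∀ a b : Fin N, (b : ℕ) + 1 < (a : ℕ) ∨ (a : ℕ) < (b : ℕ) → L a b = 0 := by
    intro a b hab
    rw [hL, if_neg (by simp only [Fin.ext_iff]; omega), if_neg (by omega)]
  by_cases hm : (i : ℕ) ≤ (m : ℕ) + 1 ∧ (m : ℕ) ≤ (i : ℕ)
  · rw [hz j m (by omega)]
    exact mul_zero _
  · rw [hz i m (by omega)]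
    exact zero_mul _
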